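/- Let W ∈ ℝ[x,y] be a homogeneous polynomial of degree 6 satisfying y³·(∂W/∂x) − x³·(∂W/∂y) = 0 identically. Then W = 0. -/

import Mathlib

open MvPolynomial

private lemma coeff_pderiv_aux {σ : Type*} [DecidableEq σ] {R : Type*} [CommRing R]
    (i : σ) (m : σ →₀ ℕ) (p : MvPolynomial σ R) :
    coeff m (pderiv i p) = coeff (m + Finsupp.single i 1) p * (m i + 1) := by
  induction p using MvPolynomial.induction_on' with
  | monomial s a =>
    rw [pderiv_monomial, coeff_monomial, coeff_monomial]
    split_ifs with h1 h2 h2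
    · subst h2
      have hmi : (m + Finsupp.single i 1 : σ →₀ ℕ) i = m i + 1 := by simp
      rw [hmi]
      push_cast
      ring
    · subst h1
      have hsi : s i = 0 := by
        by_contra hne
        exact h2 (by
          ext j
          by_cases hj : j = i
          · subst hj; simp [Nat.sub_add_cancel (Nat.one_le_iff_ne_zero.2 hne)]
          · simp [hj, Finsupp.single_apply, Ne.symm hj])
      rw [hsi]
      push_cast
      ring
    · exact absurd (by subst h2; ext j; by_cases hj : j = i <;>
        simp [hj, Finsupp.single_apply]) h1
    · ring
  | add p q hp hq => simp [hp, hq, add_mul]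

private lemma coeff_Xpow_mul_aux {k : ℕ} (i : Fin 2) (p : MvPolynomial (Fin 2) ℝ)
    (μ : Fin 2 →₀ ℕ) :
    coeff μ (X i ^ k * p) =
      if Finsupp.single i k ≤ μ then coeff (μ - Finsupp.single i k) p else 0 := by
  rw [mul_comm, X_pow_eq_monomial, coeff_mul_monomial']
  split_ifs <;> simp

private lemma deg2_aux (d : Fin 2 →₀ ℕ) : d.degree = d 0 + d 1 := by
  rw [Finsupp.degree_apply,
    Finset.sum_subset (Finset.subset_univ _)
      (by intro i _ hi; simpa using Finsupp.notMem_support_iff.mp hi)]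
  simp [Fin.sum_univ_two]

/-- A homogeneous polynomial `W` of degree `6` in two variables satisfying
`y³·(∂W/∂x) − x³·(∂W/∂y) = 0` identically (i.e., a sextic first integral of the vector field
`ẋ = y³, ẏ = −x³`) must be zero. -/
theorem sextic_first_integral_is_zero
    (W : MvPolynomial (Fin 2) ℝ) (hWhom : W.IsHomogeneous 6)
    (h : X 1 ^ 3 * pderiv 0 W - X 0 ^ 3 * pderiv 1 W = 0) :
    W = 0 := by
  have h' : X 1 ^ 3 * pderiv 0 W = X 0 ^ 3 * pderiv 1 W := sub_eq_zero.mp h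
  set c : ℕ → ℕ → ℝ :=
    fun i j => coeff (Finsupp.single 0 i + Finsupp.single 1 j) W with hc
  have key : ∀ a b : ℕ,
      (if 3 ≤ b then c (a + 1) (b - 3) * ((a : ℝ) + 1) else 0)
        = if 3 ≤ a then c (a - 3) (b + 1) * ((b : ℝ) + 1) else 0 := by
    intro a b
    have hthis := congrArg
      (coeff (Finsupp.single (0 : Fin 2) a + Finsupp.single 1 b)) h'
    rw [coeff_Xpow_mul_aux, coeff_Xpow_mul_aux] at hthis
    have e1 : (Finsupp.single (1 : Fin 2) 3 ≤
        Finsupp.single (0 : Fin 2) a + Finsupp.single 1 b) ↔ 3 ≤ b := by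
      rw [Finsupp.single_le_iff]; simp [Finsupp.single_apply]
    have e2 : (Finsupp.single (0 : Fin 2) 3 ≤
        Finsupp.single (0 : Fin 2) a + Finsupp.single 1 b) ↔ 3 ≤ a := by
      rw [Finsupp.single_le_iff]; simp [Finsupp.single_apply]
    have s1 : (Finsupp.single (0 : Fin 2) a + Finsupp.single 1 b)
        - Finsupp.single 1 3
        = Finsupp.single (0 : Fin 2) a + Finsupp.single 1 (b - 3) := by
      ext i; fin_cases i <;> simp [Finsupp.tsub_apply, Finsupp.single_apply]
    have s2 : (Finsupp.single (0 : Fin 2) a + Finsupp.single 1 b)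
        - Finsupp.single 0 3
        = Finsupp.single (0 : Fin 2) (a - 3) + Finsupp.single 1 b := by
      ext i; fin_cases i <;> simp [Finsupp.tsub_apply, Finsupp.single_apply]
    have s3 : (Finsupp.single (0 : Fin 2) a + Finsupp.single 1 (b - 3))
        + Finsupp.single 0 1
        = Finsupp.single (0 : Fin 2) (a + 1) + Finsupp.single 1 (b - 3) := by
      ext i; fin_cases i <;> simp [Finsupp.single_apply, Nat.add_comm]
    have s4 : (Finsupp.single (0 : Fin 2) (a - 3) + Finsupp.single 1 b)
        + Finsupp.single 1 1
        = Finsupp.single (0 : Fin 2) (a - 3) + Finsupp.single 1 (b + 1) := by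
      ext i; fin_cases i <;> simp [Finsupp.single_apply]
    have v1 : (Finsupp.single (0 : Fin 2) a + Finsupp.single 1 (b - 3)
        : Fin 2 →₀ ℕ) 0 = a := by
      simp [Finsupp.single_apply]
    have v2 : (Finsupp.single (0 : Fin 2) (a - 3) + Finsupp.single 1 b
        : Fin 2 →₀ ℕ) 1 = b := by
      simp [Finsupp.single_apply]
    rw [s1, s2, coeff_pderiv_aux, coeff_pderiv_aux, s3, s4, v1, v2] at hthis
    simpa only [e1, e2, hc] using hthis
  have hz : ∀ i j : ℕ, i + j ≠ 6 → c i j = 0 := by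
    intro i j hij
    apply hWhom.coeff_eq_zero
    rw [deg2_aux]
    simpa [Finsupp.single_apply] using hij
  have a1 : c 1 5 = 0 := by have := key 0 8; norm_num at this; linarith
  have a2 : c 2 4 = 0 := by have := key 1 7; norm_num at this; linarith
  have a3 : c 3 3 = 0 := by have := key 2 6; norm_num at this; linarith
  have a6 : c 6 0 = 0 := by
    have := key 5 3; norm_num at this; rw [a2] at this; linarith
  have a4 : c 4 2 = 0 := by have := key 7 1; norm_num at this; linarith
  have a5 : c 5 1 = 0 := by have := key 8 0; norm_num at this; linarith
  have a0 : c 0 6 = 0 := by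
    have := key 3 5; norm_num at this; rw [a4] at this; linarith
  apply MvPolynomial.ext
  intro d
  rw [coeff_zero]
  have hd : d = Finsupp.single 0 (d 0) + Finsupp.single 1 (d 1) := by
    ext i; fin_cases i <;> simp [Finsupp.single_apply]
  by_cases h6 : d 0 + d 1 = 6
  · rw [hd]
    show c (d 0) (d 1) = 0
    have main : ∀ i j : ℕ, i + j = 6 → c i j = 0 := by
      intro i j h6
      have hi : i ≤ 6 := by omega
      have hj : j = 6 - i := by omega
      subst hj
      interval_cases i
      · simpa using a0
      · simpa using a1
      · simpa using a2
      · simpa using a3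
      · simpa using a4
      · simpa using a5
      · simpa using a6
    exact main _ _ h6
  · apply hWhom.coeff_eq_zero
    rw [deg2_aux]
    exact h6
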